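/- Let (π, t) be a representation of a C*-correspondence X over A on a C*-algebra B. Then: (i) ker π is a positively invariant ideal of A; (ii) ker t = X·(ker π); (iii) for a ∈ A with φ_X(a) ∈ K(X), one has π(a) = ψ_t(φ_X(a)) if and only if π(a) ∈ ψ_t(K(X)). -/

import Mathlib

noncomputable section

/-- A (right) Hilbert C*-module over a C*-algebra `A`. -/
class HilbertModule (A : Type*) [CStarAlgebra A] (X : Type*)
    [NormedAddCommGroup X] [NormedSpace ℂ X] : Type _ where
  rsmul : X → A → X
  inner : X → X → A
  rsmul_add_left : ∀ (x y : X) (a : A), rsmul (x + y) a = rsmul x a + rsmul y a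
  rsmul_add_right : ∀ (x : X) (a b : A), rsmul x (a + b) = rsmul x a + rsmul x b
  rsmul_rsmul : ∀ (x : X) (a b : A), rsmul (rsmul x a) b = rsmul x (a * b)
  rsmul_csmul_left : ∀ (c : ℂ) (x : X) (a : A), rsmul (c • x) a = c • rsmul x a
  rsmul_csmul_right : ∀ (c : ℂ) (x : X) (a : A), rsmul x (c • a) = c • rsmul x a
  inner_add_left : ∀ (x y z : X), inner (x + y) z = inner x z + inner y z
  inner_add_right : ∀ (x y z : X), inner x (y + z) = inner x y + inner x z
  inner_csmul_right : ∀ (c : ℂ) (x y : X), inner x (c • y) = c • inner x y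
  star_inner : ∀ (x y : X), star (inner x y) = inner y x
  inner_rsmul_right : ∀ (x y : X) (a : A), inner x (rsmul y a) = inner x y * a
  inner_self_isPositive : ∀ x : X, ∃ b : A, inner x x = star b * b
  norm_sq_inner : ∀ x : X, ‖x‖ ^ 2 = ‖inner x x‖
  norm_inner_le : ∀ x y : X, ‖inner x y‖ ≤ ‖x‖ * ‖y‖
  norm_rsmul_le : ∀ (x : X) (a : A), ‖rsmul x a‖ ≤ ‖x‖ * ‖a‖

namespace HilbertModule

variable {A : Type*} [CStarAlgebra A] {X : Type*}
  [NormedAddCommGroup X] [NormedSpace ℂ X] [HilbertModule A X]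

/-- The closed submodule `X·S` generated by products `ξ·a`, `a ∈ S`. -/
def idealSub (X : Type*) {A : Type*} [CStarAlgebra A] [NormedAddCommGroup X]
    [NormedSpace ℂ X] [HilbertModule A X] (S : Set A) : Set X :=
  closure (Submodule.span ℂ {x : X | ∃ (ξ : X) (a : A), a ∈ S ∧ x = rsmul ξ a} : Set X)

/-- The rank-one ("theta") operator `ζ ↦ ξ⟨η,ζ⟩`. -/
def rankOne (A : Type*) {X : Type*} [CStarAlgebra A] [NormedAddCommGroup X]
    [NormedSpace ℂ X] [HilbertModule A X] (ξ η : X) : X →L[ℂ] X :=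
  LinearMap.mkContinuous
    { toFun := fun ζ => rsmul ξ (inner (A := A) η ζ)
      map_add' := fun x y => by
        show rsmul ξ (inner (A := A) η (x + y)) = _
        rw [inner_add_right, rsmul_add_right]
      map_smul' := fun c x => by
        show rsmul ξ (inner (A := A) η (c • x)) = _
        simp only [RingHom.id_apply]
        rw [inner_csmul_right, rsmul_csmul_right] }
    (‖ξ‖ * ‖η‖)
    (fun ζ => by
      calc ‖rsmul ξ (inner (A := A) η ζ)‖ ≤ ‖ξ‖ * ‖inner (A := A) η ζ‖ :=
            norm_rsmul_le _ _
        _ ≤ ‖ξ‖ * (‖η‖ * ‖ζ‖) :=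
            mul_le_mul_of_nonneg_left (norm_inner_le _ _) (norm_nonneg _)
        _ = ‖ξ‖ * ‖η‖ * ‖ζ‖ := (mul_assoc _ _ _).symm)

/-- The set of "compact" operators `K(X)`: the closed linear span of rank-one operators. -/
def compacts (A X : Type*) [CStarAlgebra A] [NormedAddCommGroup X]
    [NormedSpace ℂ X] [HilbertModule A X] : Set (X →L[ℂ] X) :=
  closure (Submodule.span ℂ {T : X →L[ℂ] X | ∃ ξ η : X, T = rankOne A ξ η} : Set (X →L[ℂ] X))

/-- `K(X·I)`, viewed inside the operators on `X`: the closed span of rank-one operators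
with both legs in the subset `S`. -/
def compactsOn (A : Type*) {X : Type*} [CStarAlgebra A] [NormedAddCommGroup X]
    [NormedSpace ℂ X] [HilbertModule A X] (S : Set X) : Set (X →L[ℂ] X) :=
  closure (Submodule.span ℂ
    {T : X →L[ℂ] X | ∃ ξ ∈ S, ∃ η ∈ S, T = rankOne A ξ η} : Set (X →L[ℂ] X))

/-- An operator is adjointable if it has an adjoint with respect to the `A`-valued
inner product. -/
def IsAdjointable (A : Type*) {X : Type*} [CStarAlgebra A] [NormedAddCommGroup X]
    [NormedSpace ℂ X] [HilbertModule A X] (S : X →L[ℂ] X) : Prop :=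
  ∃ T : X →L[ℂ] X, ∀ x y : X, inner (A := A) (S x) y = inner (A := A) x (T y)

end HilbertModule

/-- A C*-correspondence over `A`: a Hilbert `A`-module with a left action of `A`
by adjointable operators. -/
class Correspondence (A : Type*) [CStarAlgebra A] (X : Type*)
    [NormedAddCommGroup X] [NormedSpace ℂ X] extends HilbertModule A X where
  lsmul : A → X → X
  lsmul_add_left : ∀ (a b : A) (x : X), lsmul (a + b) x = lsmul a x + lsmul b x
  lsmul_add_right : ∀ (a : A) (x y : X), lsmul a (x + y) = lsmul a x + lsmul a y
  lsmul_mul : ∀ (a b : A) (x : X), lsmul (a * b) x = lsmul a (lsmul b x)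
  lsmul_csmul_left : ∀ (c : ℂ) (a : A) (x : X), lsmul (c • a) x = c • lsmul a x
  lsmul_csmul_right : ∀ (c : ℂ) (a : A) (x : X), lsmul a (c • x) = c • lsmul a x
  inner_lsmul_left : ∀ (a : A) (x y : X), inner (lsmul a x) y = inner x (lsmul (star a) y)
  lsmul_rsmul : ∀ (a : A) (x : X) (b : A), lsmul a (rsmul x b) = rsmul (lsmul a x) b
  norm_lsmul_le : ∀ (a : A) (x : X), ‖lsmul a x‖ ≤ ‖a‖ * ‖x‖

namespace Correspondence

open HilbertModule

variable {A : Type*} [CStarAlgebra A] {X : Type*}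
  [NormedAddCommGroup X] [NormedSpace ℂ X] [Correspondence A X]

/-- The left action `φ_X(a)` as a continuous linear operator on `X`. -/
def lact (A : Type*) {X : Type*} [CStarAlgebra A] [NormedAddCommGroup X]
    [NormedSpace ℂ X] [Correspondence A X] (a : A) : X →L[ℂ] X :=
  LinearMap.mkContinuous
    { toFun := lsmul a
      map_add' := lsmul_add_right a
      map_smul' := fun c x => by
        show lsmul a (c • x) = _
        simp only [RingHom.id_apply]; rw [lsmul_csmul_right] }
    ‖a‖ (norm_lsmul_le a)

/-- The ideal `X(S)`: closed span of `{⟨η, φ_X(a)ξ⟩ : a ∈ S}`. -/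
def corrApply (X : Type*) {A : Type*} [CStarAlgebra A] [NormedAddCommGroup X]
    [NormedSpace ℂ X] [Correspondence A X] (S : Set A) : Set A :=
  closure (Submodule.span ℂ
    {b : A | ∃ a ∈ S, ∃ ξ η : X, b = inner (A := A) η (lsmul a ξ)} : Set A)

/-- The ideal `X⁻¹(S) = {a : ⟨η, φ_X(a)ξ⟩ ∈ S for all ξ, η}`. -/
def corrInv (X : Type*) {A : Type*} [CStarAlgebra A] [NormedAddCommGroup X]
    [NormedSpace ℂ X] [Correspondence A X] (S : Set A) : Set A :=
  {a : A | ∀ ξ η : X, inner (A := A) η (lsmul a ξ) ∈ S}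

/-- The kernel of the left action `φ_X`. -/
def kerLact (X : Type*) {A : Type*} [CStarAlgebra A] [NormedAddCommGroup X]
    [NormedSpace ℂ X] [Correspondence A X] : Set A :=
  {a : A | ∀ ξ : X, lsmul a ξ = 0}

/-- Katsura's ideal `J_X = φ_X⁻¹(K(X)) ∩ (ker φ_X)^⊥`. -/
def JX (X : Type*) {A : Type*} [CStarAlgebra A] [NormedAddCommGroup X]
    [NormedSpace ℂ X] [Correspondence A X] : Set A :=
  {a : A | lact A (X := X) a ∈ compacts A X ∧ ∀ b ∈ kerLact X, a * b = 0}

end Correspondence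

open HilbertModule Correspondence

/-- Data presenting a Hilbert `B`-module `Y` as the quotient `X_I = X/XI` of a Hilbert
`A`-module `X` by a closed two-sided ideal `I` of `A` (with `B` playing the role of `A/I`). -/
structure QuotientData (A B : Type*) [CStarAlgebra A] [CStarAlgebra B]
    (I : TwoSidedIdeal A)
    (X Y : Type*) [NormedAddCommGroup X] [NormedSpace ℂ X] [HilbertModule A X]
    [NormedAddCommGroup Y] [NormedSpace ℂ Y] [HilbertModule B Y] : Type _ where
  π : A →⋆ₐ[ℂ] B
  π_surjective : Function.Surjective π
  π_ker : ∀ a : A, π a = 0 ↔ a ∈ I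
  q : X →ₗ[ℂ] Y
  q_surjective : Function.Surjective q
  q_ker : ∀ ξ : X, q ξ = 0 ↔ ξ ∈ idealSub X (I : Set A)
  q_inner : ∀ ξ ζ : X, inner (A := B) (q ξ) (q ζ) = π (inner (A := A) ξ ζ)
  q_rsmul : ∀ (ξ : X) (a : A), q (rsmul ξ a) = rsmul (q ξ) (π a)


/-- Quotient data compatible with the left actions (presenting `X_I` as a
C*-correspondence over `A/I`). -/
structure CorrQuotientData (A B : Type*) [CStarAlgebra A] [CStarAlgebra B]
    (I : TwoSidedIdeal A)
    (X Y : Type*) [NormedAddCommGroup X] [NormedSpace ℂ X] [Correspondence A X]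
    [NormedAddCommGroup Y] [NormedSpace ℂ Y] [Correspondence B Y]
    extends QuotientData A B I X Y where
  q_lsmul : ∀ (a : A) (ξ : X), q (lsmul a ξ) = lsmul (π a) (q ξ)

/-- Katsura's ideal `J(I) = {a : [φ_X(a)]_I ∈ K(X_I), a·X⁻¹(I) ⊂ I}`, expressed via
quotient data presenting `X_I`. -/
def JofI {A B : Type*} [CStarAlgebra A] [CStarAlgebra B] {I : TwoSidedIdeal A}
    {X Y : Type*} [NormedAddCommGroup X] [NormedSpace ℂ X] [Correspondence A X]
    [NormedAddCommGroup Y] [NormedSpace ℂ Y] [HilbertModule B Y]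
    (D : QuotientData A B I X Y) : Set A :=
  {a : A | (∃ T ∈ compacts B Y, ∀ ξ : X, T (D.q ξ) = D.q (lsmul a ξ)) ∧
    ∀ b ∈ corrInv X (I : Set A), a * b ∈ I}

/-- A Hilbert `A`-bimodule: a C*-correspondence together with a left inner product
satisfying `φ_X(⟪ξ,η⟫) = θ_{ξ,η}`. -/
class HilbertBimodule (A : Type*) [CStarAlgebra A] (X : Type*)
    [NormedAddCommGroup X] [NormedSpace ℂ X] extends Correspondence A X where
  linner : X → X → A
  lsmul_linner : ∀ ξ η ζ : X, lsmul (linner ξ η) ζ = rsmul ξ (inner η ζ)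

/-- The closed subspace `φ_X(S)X`: closed span of `{φ_X(a)ξ : a ∈ S}`. -/
def lsmulSet (X : Type*) {A : Type*} [CStarAlgebra A] [NormedAddCommGroup X]
    [NormedSpace ℂ X] [Correspondence A X] (S : Set A) : Set X :=
  closure (Submodule.span ℂ
    {x : X | ∃ a ∈ S, ∃ ξ : X, x = Correspondence.lsmul a ξ} : Set X)


open scoped CStarAlgebra

section Stmt15Aux

open HilbertModule Correspondence Filter Topology

lemma stmt15_aux_bound (s x : ℝ) (hs : 0 < s) (hx : 0 ≤ x) :
    |x - x * (x * (x * (x^2 + s)⁻¹)) - (x * (x * (x^2 + s)⁻¹)) * x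
      + (x * (x * (x^2 + s)⁻¹)) * (x * (x * (x * (x^2 + s)⁻¹)))| ≤ Real.sqrt s := by
  have hd : 0 < x^2 + s := by positivity
  have he : x - x * (x * (x * (x^2 + s)⁻¹)) - (x * (x * (x^2 + s)⁻¹)) * x
      + (x * (x * (x^2 + s)⁻¹)) * (x * (x * (x * (x^2 + s)⁻¹))) = x * s^2 / (x^2+s)^2 := by
    field_simp
    ring
  rw [he, abs_of_nonneg (by positivity), div_le_iff₀ (by positivity)]
  set r := Real.sqrt s with hrdef
  have hr0 : 0 ≤ r := Real.sqrt_nonneg s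
  have hr : r^2 = s := Real.sq_sqrt hs.le
  rw [← hr]
  nlinarith [mul_nonneg hr0 (sq_nonneg (x^2 + r^2 - x*r)),
    mul_nonneg (mul_nonneg hx (mul_nonneg hr0 hr0)) (sq_nonneg x),
    mul_nonneg (mul_nonneg hx (mul_nonneg hr0 hr0)) (sq_nonneg (x - r/2)),
    mul_nonneg (mul_nonneg hx (mul_nonneg hr0 hr0)) (sq_nonneg r)]

variable {A B : Type*} [CStarAlgebra A] [CStarAlgebra B]
    {X : Type*} [NormedAddCommGroup X] [NormedSpace ℂ X] [Correspondence A X]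

lemma stmt15_inner_rsmul_left (x y : X) (a : A) :
    inner (A := A) (rsmul x a) y = star a * inner (A := A) x y := by
  rw [← star_inner, inner_rsmul_right, star_mul, star_inner]

lemma stmt15_inner_sub_left (x y z : X) :
    inner (A := A) (x - y) z = inner (A := A) x z - inner (A := A) y z := by
  have h := inner_add_left (A := A) (x - y) y z
  rw [show x - y + y = x by abel] at h
  exact eq_sub_of_add_eq h.symm

lemma stmt15_inner_sub_right (x y z : X) :
    inner (A := A) x (y - z) = inner (A := A) x y - inner (A := A) x z := by
  have h := inner_add_right (A := A) x (y - z) z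
  rw [show y - z + z = y by abel] at h
  exact eq_sub_of_add_eq h.symm

lemma stmt15_rankOne_apply (ξ η ζ : X) :
    rankOne A ξ η ζ = rsmul ξ (inner (A := A) η ζ) := rfl

lemma stmt15_lact_apply (a : A) (ξ : X) :
    lact A (X := X) a ξ = lsmul a ξ := rfl

lemma stmt15_t_rsmul (π : A →⋆ₙₐ[ℂ] B) (t : X →ₗ[ℂ] B)
    (ht₁ : ∀ ξ η : X, star (t ξ) * t η = π (inner (A := A) ξ η)) (ξ : X) (a : A) :
    t (rsmul ξ a) = t ξ * π a := by
  have h1 : star (t (rsmul ξ a)) * t (rsmul ξ a)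
      = π (star a * (inner (A := A) ξ ξ * a)) := by
    rw [ht₁, inner_rsmul_right, stmt15_inner_rsmul_left, mul_assoc]
  have h2 : star (t (rsmul ξ a)) * (t ξ * π a)
      = π (star a * (inner (A := A) ξ ξ * a)) := by
    rw [← mul_assoc, ht₁, stmt15_inner_rsmul_left, ← map_mul, mul_assoc]
  have h3 : star (t ξ * π a) * t (rsmul ξ a)
      = π (star a * (inner (A := A) ξ ξ * a)) := by
    rw [star_mul, mul_assoc, ht₁, inner_rsmul_right, ← map_star, ← map_mul]
  have h4 : star (t ξ * π a) * (t ξ * π a)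
      = π (star a * (inner (A := A) ξ ξ * a)) := by
    rw [star_mul, mul_assoc, ← mul_assoc (star (t ξ)), ht₁, ← map_star, ← map_mul, ← map_mul]
  have key : star (t (rsmul ξ a) - t ξ * π a) * (t (rsmul ξ a) - t ξ * π a) = 0 := by
    rw [star_sub, sub_mul, mul_sub, mul_sub, h1, h2, h3, h4]
    simp
  exact sub_eq_zero.mp ((CStarRing.star_mul_self_eq_zero_iff _).mp key)

lemma stmt15_mem_idealSub (π : A →⋆ₙₐ[ℂ] B) (ξ : X)
    (hπ : π (inner (A := A) ξ ξ) = 0) :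
    ξ ∈ idealSub X {a : A | π a = 0} := by
  letI := CStarAlgebra.spectralOrder A
  haveI := CStarAlgebra.spectralOrderedRing A
  set h := inner (A := A) ξ ξ with hh
  have hsa : IsSelfAdjoint h := star_inner ξ ξ
  have hpos : 0 ≤ h := by
    obtain ⟨b, hb⟩ := inner_self_isPositive (A := A) ξ
    rw [hh, hb]
    exact star_mul_self_nonneg b
  have hcl : idealSub X {a : A | π a = 0}
      = closure (Submodule.span ℂ
        {x : X | ∃ (ζ : X) (a : A), a ∈ {a : A | π a = 0} ∧ x = rsmul ζ a} : Set X) := rfl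
  rw [hcl, Metric.mem_closure_iff]
  intro ε hε
  set s : ℝ := (ε^2/2)^2 with hsdef
  have hs : 0 < s := by positivity
  set g : ℝ → ℝ := fun x => x * (x^2 + s)⁻¹ with hgdef
  set f : ℝ → ℝ := fun x => x * g x with hfdef
  have hgc : Continuous g := continuous_id.mul
    (((continuous_pow 2).add continuous_const).inv₀ (fun x => (add_pos_of_nonneg_of_pos (sq_nonneg x) hs).ne'))
  have hfc : Continuous f := continuous_id.mul hgc
  set u := cfc f h with hudef
  have husa : IsSelfAdjoint u := cfc_predicate f h
  have hu_factor : u = h * cfc g h := by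
    rw [hudef, hfdef, cfc_mul (fun x : ℝ => x) g h continuous_id'.continuousOn hgc.continuousOn,
      cfc_id' ℝ h]
  have e1 : cfc (fun x : ℝ => x * f x) h = h * u := by
    rw [cfc_mul (fun x : ℝ => x) f h continuous_id'.continuousOn hfc.continuousOn, cfc_id' ℝ h]
  have e2 : cfc (fun x : ℝ => f x * x) h = u * h := by
    rw [cfc_mul f (fun x : ℝ => x) h hfc.continuousOn continuous_id'.continuousOn, cfc_id' ℝ h]
  have e3 : cfc (fun x : ℝ => f x * (x * f x)) h = u * (h * u) := by
    rw [cfc_mul f (fun x : ℝ => x * f x) h hfc.continuousOn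
      (continuous_id.mul hfc).continuousOn, e1]
  have hE : cfc (fun x : ℝ => x - x * f x - f x * x + f x * (x * f x)) h
      = h - h * u - u * h + u * (h * u) := by
    rw [cfc_add h (fun x : ℝ => x - x * f x - f x * x) (fun x : ℝ => f x * (x * f x))
        (((continuous_id.sub (continuous_id.mul hfc)).sub (hfc.mul continuous_id)).continuousOn)
        ((hfc.mul (continuous_id.mul hfc)).continuousOn),
      cfc_sub (fun x : ℝ => x - x * f x) (fun x : ℝ => f x * x) h
        ((continuous_id.sub (continuous_id.mul hfc)).continuousOn)
        ((hfc.mul continuous_id).continuousOn),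
      cfc_sub (fun x : ℝ => x) (fun x : ℝ => x * f x) h
        continuous_id'.continuousOn ((continuous_id.mul hfc).continuousOn),
      cfc_id' ℝ h, e1, e2, e3]
  have hπu : π u = 0 := by
    rw [hu_factor, map_mul, hπ, zero_mul]
  refine ⟨rsmul ξ u, Submodule.subset_span ⟨ξ, u, hπu, rfl⟩, ?_⟩
  rw [dist_eq_norm]
  have hEinner : inner (A := A) (ξ - rsmul ξ u) (ξ - rsmul ξ u)
      = h - h * u - u * h + u * (h * u) := by
    rw [stmt15_inner_sub_left, stmt15_inner_sub_right, stmt15_inner_sub_right,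
      inner_rsmul_right, stmt15_inner_rsmul_left, stmt15_inner_rsmul_left,
      inner_rsmul_right, husa.star_eq, ← hh]
    abel
  have hnorm : ‖ξ - rsmul ξ u‖^2 ≤ Real.sqrt s := by
    rw [norm_sq_inner (A := A) (ξ - rsmul ξ u), hEinner, ← hE]
    apply norm_cfc_le (Real.sqrt_nonneg s)
    intro x hx
    have hx0 : 0 ≤ x := spectrum_nonneg_of_nonneg hpos hx
    have hb := stmt15_aux_bound s x hs hx0
    rw [Real.norm_eq_abs]
    simpa only [hfdef, hgdef] using hb
  have hsqrt : Real.sqrt s = ε^2/2 := by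
    rw [hsdef, Real.sqrt_sq (by positivity)]
  have h1 : ‖ξ - rsmul ξ u‖^2 < ε^2 := by
    rw [hsqrt] at hnorm
    nlinarith
  exact lt_of_pow_lt_pow_left₀ 2 hε.le h1

end Stmt15Aux

open HilbertModule Correspondence in
/-- for a representation `(π, t)` of a C*-correspondence `X` on a
C*-algebra `B` (with `ψ = ψ_t` the induced map on compacts):
(i) `ker π` is positively invariant; (ii) `ker t = X·(ker π)`;
(iii) for `a` with `φ_X(a) ∈ K(X)`, `π(a) = ψ_t(φ_X(a))` iff `π(a) ∈ ψ_t(K(X))`. -/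
theorem stmt15 {A B : Type*} [CStarAlgebra A] [CStarAlgebra B]
    {X : Type*} [NormedAddCommGroup X] [NormedSpace ℂ X] [Correspondence A X]
    [CompleteSpace X]
    (π : A →⋆ₙₐ[ℂ] B) (t : X →ₗ[ℂ] B)
    (ht₁ : ∀ ξ η : X, star (t ξ) * t η = π (inner (A := A) ξ η))
    (ht₂ : ∀ (a : A) (ξ : X), π a * t ξ = t (lsmul a ξ))
    -- `ψ` agrees on `K(X)` with the canonical map `ψ_t`:
    (ψ : (X →L[ℂ] X) → B)
    (hψθ : ∀ ξ η : X, ψ (rankOne A ξ η) = t ξ * star (t η))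
    (hψadd : ∀ S T : X →L[ℂ] X, S ∈ compacts A X → T ∈ compacts A X →
      ψ (S + T) = ψ S + ψ T)
    (hψsmul : ∀ (c : ℂ) (S : X →L[ℂ] X), S ∈ compacts A X → ψ (c • S) = c • ψ S)
    (hψcont : ContinuousOn ψ (compacts A X)) :
    corrApply X {a : A | π a = 0} ⊆ {a : A | π a = 0} ∧
    {ξ : X | t ξ = 0} = idealSub X {a : A | π a = 0} ∧
    (∀ a : A, lact A (X := X) a ∈ compacts A X →
      (π a = ψ (lact A (X := X) a) ↔ π a ∈ ψ '' compacts A X)) := by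
  have hπcont : Continuous π := map_continuous π
  have htnorm : ∀ ξ : X, ‖t ξ‖ ≤ ‖ξ‖ := by
    intro ξ
    have h1 : ‖t ξ‖ * ‖t ξ‖ = ‖π (inner (A := A) ξ ξ)‖ := by
      rw [← CStarRing.norm_star_mul_self, ht₁]
    have h2 : ‖π (inner (A := A) ξ ξ)‖ ≤ ‖ξ‖ * ‖ξ‖ := by
      calc ‖π (inner (A := A) ξ ξ)‖ ≤ ‖inner (A := A) ξ ξ‖ :=
            NonUnitalStarAlgHom.norm_apply_le π _
        _ = ‖ξ‖ * ‖ξ‖ := by rw [← norm_sq_inner (A := A) ξ]; ring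
    nlinarith [norm_nonneg (t ξ), norm_nonneg ξ]
  have htcont : Continuous t :=
    AddMonoidHomClass.continuous_of_bound t 1 (fun ξ => by simpa using htnorm ξ)
  have htr := stmt15_t_rsmul π t ht₁
  refine ⟨?_, ?_, ?_⟩
  · -- (i) positively invariant
    have hker : IsClosed {a : A | π a = 0} := isClosed_eq hπcont continuous_const
    have hsub : (Submodule.span ℂ
        {b : A | ∃ a ∈ {a : A | π a = 0}, ∃ ξ η : X, b = inner (A := A) η (lsmul a ξ)} :
          Set A) ⊆ {a : A | π a = 0} := by
      intro b hb
      replace hb : b ∈ Submodule.span ℂ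
        {b : A | ∃ a ∈ {a : A | π a = 0}, ∃ ξ η : X, b = inner (A := A) η (lsmul a ξ)} := hb
      induction hb using Submodule.span_induction with
      | mem x hx =>
        obtain ⟨a, ha, ξ, η, rfl⟩ := hx
        show π (inner (A := A) η (lsmul a ξ)) = 0
        rw [← ht₁, ← ht₂, show π a = 0 from ha, zero_mul, mul_zero]
      | zero => exact map_zero π
      | add x y hx hy ihx ihy => show π (x + y) = 0; rw [map_add, ihx, ihy, add_zero]
      | smul c x hx ih => show π (c • x) = 0; rw [map_smul, ih, smul_zero]
    exact closure_minimal hsub hker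
  · -- (ii) ker t = X (ker π)
    refine Set.Subset.antisymm ?_ ?_
    · intro ξ hξ
      refine stmt15_mem_idealSub π ξ ?_
      rw [← ht₁, show t ξ = 0 from hξ, star_zero, zero_mul]
    · have hker : IsClosed {ξ : X | t ξ = 0} := isClosed_eq htcont continuous_const
      have hsub : (Submodule.span ℂ
          {x : X | ∃ (ζ : X) (a : A), a ∈ {a : A | π a = 0} ∧ x = rsmul ζ a} : Set X)
            ⊆ {ξ : X | t ξ = 0} := by
        intro x hx
        replace hx : x ∈ Submodule.span ℂ
          {x : X | ∃ (ζ : X) (a : A), a ∈ {a : A | π a = 0} ∧ x = rsmul ζ a} := hx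
        induction hx using Submodule.span_induction with
        | mem x hx =>
          obtain ⟨ζ, a, ha, rfl⟩ := hx
          show t (rsmul ζ a) = 0
          rw [htr, show π a = 0 from ha, mul_zero]
        | zero => exact map_zero t
        | add x y hx hy ihx ihy => show t (x + y) = 0; rw [map_add, ihx, ihy, add_zero]
        | smul c x hx ih => show t (c • x) = 0; rw [map_smul, ih, smul_zero]
      exact closure_minimal hsub hker
  · -- (iii)
    have hspanK : ∀ S : X →L[ℂ] X,
        S ∈ Submodule.span ℂ {T : X →L[ℂ] X | ∃ ξ η : X, T = rankOne A ξ η} →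
          S ∈ compacts A X := fun S hS => subset_closure hS
    have h0K : (0 : X →L[ℂ] X) ∈ compacts A X := hspanK 0 (Submodule.zero_mem _)
    have hψ0 : ψ 0 = 0 := by
      have := hψsmul 0 0 h0K
      simpa using this
    have key1 : ∀ S : X →L[ℂ] X, S ∈ compacts A X → ∀ ξ : X, ψ S * t ξ = t (S ξ) := by
      have hspan1 : ∀ S : X →L[ℂ] X,
          S ∈ Submodule.span ℂ {T : X →L[ℂ] X | ∃ ξ η : X, T = rankOne A ξ η} →
            ∀ ξ : X, ψ S * t ξ = t (S ξ) := by
        intro S hS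
        induction hS using Submodule.span_induction with
        | mem T hT =>
          obtain ⟨η, ζ, rfl⟩ := hT
          intro ξ
          rw [hψθ, mul_assoc, ht₁, stmt15_rankOne_apply, htr]
        | zero => intro ξ; simp [hψ0]
        | add S T hS hT ihS ihT =>
          intro ξ
          rw [hψadd S T (hspanK S hS) (hspanK T hT), add_mul, ihS, ihT,
            ContinuousLinearMap.add_apply, map_add]
        | smul c S hS ih =>
          intro ξ
          rw [hψsmul c S (hspanK S hS), smul_mul_assoc, ih,
            ContinuousLinearMap.smul_apply, map_smul]
      intro S hS ξ
      have hS' : S ∈ closure ((Submodule.span ℂ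
          {T : X →L[ℂ] X | ∃ ξ η : X, T = rankOne A ξ η}) : Set (X →L[ℂ] X)) := hS
      obtain ⟨w, hw_mem, hw_lim⟩ := mem_closure_iff_seq_limit.mp hS'
      have hten : Filter.Tendsto (fun k => ψ (w k)) Filter.atTop (nhds (ψ S)) := by
        refine (hψcont S hS).tendsto.comp ?_
        exact tendsto_nhdsWithin_of_tendsto_nhds_of_eventually_within _ hw_lim
          (Filter.Eventually.of_forall fun k => subset_closure (hw_mem k))
      have hLHS : Filter.Tendsto (fun k => ψ (w k) * t ξ) Filter.atTop (nhds (ψ S * t ξ)) :=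
        hten.mul tendsto_const_nhds
      have happ : Filter.Tendsto (fun k => (w k) ξ) Filter.atTop (nhds (S ξ)) :=
        (((ContinuousLinearMap.apply ℂ X ξ).continuous).tendsto S).comp hw_lim
      have hRHS : Filter.Tendsto (fun k => t ((w k) ξ)) Filter.atTop (nhds (t (S ξ))) :=
        (htcont.tendsto (S ξ)).comp happ
      have heq : (fun k => ψ (w k) * t ξ) = fun k => t ((w k) ξ) :=
        funext fun k => hspan1 (w k) (hw_mem k) ξ
      rw [heq] at hLHS
      exact tendsto_nhds_unique hLHS hRHS
    set Msub : Submodule ℂ B :=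
      (Submodule.span ℂ {b : B | ∃ ξ η : X, b = t ξ * star (t η)}).topologicalClosure
      with hMsubdef
    have hMclosed : IsClosed (Msub : Set B) := Submodule.isClosed_topologicalClosure _
    have hMcoe : (Msub : Set B)
        = closure ((Submodule.span ℂ {b : B | ∃ ξ η : X, b = t ξ * star (t η)}) : Set B) :=
      Submodule.topologicalClosure_coe _
    have key2 : ∀ S : X →L[ℂ] X, S ∈ compacts A X → ψ S ∈ Msub := by
      have hspan2 : ∀ S : X →L[ℂ] X,
          S ∈ Submodule.span ℂ {T : X →L[ℂ] X | ∃ ξ η : X, T = rankOne A ξ η} →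
            ψ S ∈ Msub := by
        intro S hS
        induction hS using Submodule.span_induction with
        | mem T hT =>
          obtain ⟨η, ζ, rfl⟩ := hT
          rw [hψθ]
          exact Submodule.le_topologicalClosure _ (Submodule.subset_span ⟨η, ζ, rfl⟩)
        | zero => rw [hψ0]; exact Submodule.zero_mem _
        | add S T hS hT ihS ihT =>
          rw [hψadd S T (hspanK S hS) (hspanK T hT)]
          exact Submodule.add_mem _ ihS ihT
        | smul c S hS ih =>
          rw [hψsmul c S (hspanK S hS)]
          exact Submodule.smul_mem _ _ ih
      intro S hS
      have hψcont' : ContinuousOn ψ (closure ((Submodule.span ℂ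
          {T : X →L[ℂ] X | ∃ ξ η : X, T = rankOne A ξ η}) : Set (X →L[ℂ] X))) := hψcont
      have himg := hψcont'.image_closure
      have h1 : ψ S ∈ closure (ψ '' ((Submodule.span ℂ
          {T : X →L[ℂ] X | ∃ ξ η : X, T = rankOne A ξ η}) : Set (X →L[ℂ] X))) :=
        himg ⟨S, hS, rfl⟩
      have h2 : ψ '' ((Submodule.span ℂ
          {T : X →L[ℂ] X | ∃ ξ η : X, T = rankOne A ξ η}) : Set (X →L[ℂ] X))
            ⊆ (Msub : Set B) := by
        rintro _ ⟨S', hS', rfl⟩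
        exact hspan2 S' hS'
      have h3 := closure_mono h2 h1
      rwa [hMclosed.closure_eq] at h3
    have hMstar : ∀ b ∈ Msub, star b ∈ Msub := by
      intro b hb
      have hsub : ((Submodule.span ℂ {b : B | ∃ ξ η : X, b = t ξ * star (t η)}) : Set B)
          ⊆ {b : B | star b ∈ Msub} := by
        intro x hx
        replace hx : x ∈ Submodule.span ℂ {b : B | ∃ ξ η : X, b = t ξ * star (t η)} := hx
        induction hx using Submodule.span_induction with
        | mem y hy =>
          obtain ⟨ξ, η, rfl⟩ := hy
          show star (t ξ * star (t η)) ∈ Msub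
          rw [star_mul, star_star]
          exact Submodule.le_topologicalClosure _ (Submodule.subset_span ⟨η, ξ, rfl⟩)
        | zero => show star (0 : B) ∈ Msub; rw [star_zero]; exact Submodule.zero_mem _
        | add x y hx hy ihx ihy =>
          show star (x + y) ∈ Msub
          rw [star_add]
          exact Submodule.add_mem _ ihx ihy
        | smul c x hx ih =>
          show star (c • x) ∈ Msub
          rw [star_smul]
          exact Submodule.smul_mem _ _ ih
      have hclosed : IsClosed {b : B | star b ∈ Msub} := hMclosed.preimage continuous_star
      have h6 := closure_minimal hsub hclosed
      exact h6 (by rw [← hMcoe]; exact hb)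
    intro a ha
    constructor
    · intro h
      exact ⟨lact A (X := X) a, ha, h.symm⟩
    · rintro ⟨T, hT, hTeq⟩
      have hKsub : T - lact A (X := X) a ∈ compacts A X := by
        have h1 : T ∈ (Submodule.span ℂ
            {T : X →L[ℂ] X | ∃ ξ η : X, T = rankOne A ξ η}).topologicalClosure := by
          rw [← SetLike.mem_coe, Submodule.topologicalClosure_coe]
          exact hT
        have h2 : lact A (X := X) a ∈ (Submodule.span ℂ
            {T : X →L[ℂ] X | ∃ ξ η : X, T = rankOne A ξ η}).topologicalClosure := by
          rw [← SetLike.mem_coe, Submodule.topologicalClosure_coe]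
          exact ha
        have h3 := Submodule.sub_mem _ h1 h2
        rw [← SetLike.mem_coe, Submodule.topologicalClosure_coe] at h3
        exact h3
      have hsum : ψ T = ψ (T - lact A (X := X) a) + ψ (lact A (X := X) a) := by
        have h4 := hψadd (T - lact A (X := X) a) (lact A (X := X) a) hKsub ha
        rw [sub_add_cancel] at h4
        exact h4
      have hct : ∀ ξ : X, ψ (T - lact A (X := X) a) * t ξ = 0 := by
        intro ξ
        rw [key1 _ hKsub ξ]
        have h5 : (T - lact A (X := X) a) ξ = T ξ - lsmul a ξ := by
          rw [ContinuousLinearMap.sub_apply]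
          rfl
        rw [h5, map_sub, ← key1 T hT ξ, ← ht₂, hTeq, sub_self]
      have hcM : ∀ m ∈ Msub, ψ (T - lact A (X := X) a) * m = 0 := by
        intro m hm
        have hsub : ((Submodule.span ℂ {b : B | ∃ ξ η : X, b = t ξ * star (t η)}) : Set B)
            ⊆ {b : B | ψ (T - lact A (X := X) a) * b = 0} := by
          intro x hx
          replace hx : x ∈ Submodule.span ℂ {b : B | ∃ ξ η : X, b = t ξ * star (t η)} := hx
          induction hx using Submodule.span_induction with
          | mem y hy =>
            obtain ⟨ξ, η, rfl⟩ := hy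
            show ψ (T - lact A (X := X) a) * (t ξ * star (t η)) = 0
            rw [← mul_assoc, hct ξ, zero_mul]
          | zero => show ψ (T - lact A (X := X) a) * (0 : B) = 0; rw [mul_zero]
          | add x y hx hy ihx ihy =>
            show ψ (T - lact A (X := X) a) * (x + y) = 0
            rw [mul_add, ihx, ihy, add_zero]
          | smul r x hx ih =>
            show ψ (T - lact A (X := X) a) * (r • x) = 0
            rw [mul_smul_comm, ih, smul_zero]
        have hclosed : IsClosed {b : B | ψ (T - lact A (X := X) a) * b = 0} :=
          isClosed_eq (continuous_mul_left _) continuous_const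
        have h6 := closure_minimal hsub hclosed
        exact h6 (by rw [← hMcoe]; exact hm)
      have hc0 : ψ (T - lact A (X := X) a) = 0 := by
        have h7 : ψ (T - lact A (X := X) a) * star (ψ (T - lact A (X := X) a)) = 0 :=
          hcM _ (hMstar _ (key2 _ hKsub))
        have h8 : star (star (ψ (T - lact A (X := X) a)))
            * star (ψ (T - lact A (X := X) a)) = 0 := by rwa [star_star]
        have h9 : star (ψ (T - lact A (X := X) a)) = 0 :=
          (CStarRing.star_mul_self_eq_zero_iff _).mp h8
        simpa using congrArg star h9
      rw [← hTeq, hsum, hc0, zero_add]
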